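/- Let n₀_j > 0, T_j > 0 and ρ_j > 0 for j = 1,…,N. Then there exists φ ∈ ℝ^N solving the discrete Poisson–Boltzmann equation: -ρ_j + (𝔸φ)_j + n₀_j·exp(φ_j/T_j) = 0 for all j = 1,…,N. -/

import Mathlib

open Matrix BigOperators

/-- The periodic centered second-difference matrix on `Fin N`. -/
noncomputable def Amat (N : ℕ) [NeZero N] (dx : ℝ) : Matrix (Fin N) (Fin N) ℝ :=
  fun j k =>
    if k = j then -2 / dx ^ 2
    else if k = j + 1 then 1 / dx ^ 2
    else if k = j - 1 then 1 / dx ^ 2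
    else 0

namespace DPBaux

open Filter

variable {N : ℕ} [NeZero N]

lemma fin1ne (hN : 3 ≤ N) : (1 : Fin N) ≠ 0 := by
  simp [Fin.ext_iff, Fin.val_one', Nat.mod_eq_of_lt (by omega : (1:ℕ) < N)]

lemma fin2ne (hN : 3 ≤ N) : (1 + 1 : Fin N) ≠ 0 := by
  intro h
  have h1 : (1 : Fin N).val = 1 := by rw [Fin.val_one']; exact Nat.mod_eq_of_lt (by omega)
  have := congrArg Fin.val h
  rw [Fin.val_add, h1, Fin.val_zero, Nat.mod_eq_of_lt (by omega)] at this
  omega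

lemma ne_add_one (hN : 3 ≤ N) (j : Fin N) : j + 1 ≠ j := by
  simpa using fin1ne hN

lemma sub_one_ne (hN : 3 ≤ N) (j : Fin N) : j - 1 ≠ j := by
  intro h
  apply fin1ne hN
  have := congrArg (fun z => z + 1 - j) h
  simpa [sub_add_cancel, add_sub_cancel_left, sub_add_eq_add_sub] using this

lemma add_one_ne_sub_one (hN : 3 ≤ N) (j : Fin N) : j + 1 ≠ j - 1 := by
  intro h
  apply fin2ne hN
  have h2 : j + 1 + 1 = j := by rw [h]; exact sub_add_cancel j 1
  have h3 : j + (1 + 1) = j + 0 := by rw [← add_assoc, h2, add_zero]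
  exact add_left_cancel h3

lemma Amat_mulVec (hN : 3 ≤ N) (dx : ℝ) (x : Fin N → ℝ) (j : Fin N) :
    (Amat N dx).mulVec x j = (x (j+1) + x (j-1) - 2 * x j) / dx ^ 2 := by
  unfold Amat Matrix.mulVec dotProduct
  have key : ∀ k : Fin N,
      (if k = j then -2 / dx ^ 2 else if k = j + 1 then 1 / dx ^ 2
        else if k = j - 1 then 1 / dx ^ 2 else 0) * x k
      = (if k = j then -2 / dx ^ 2 * x j else 0)
        + (if k = j + 1 then 1 / dx ^ 2 * x (j+1) else 0)
        + (if k = j - 1 then 1 / dx ^ 2 * x (j-1) else 0) := by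
    intro k
    by_cases h1 : k = j
    · subst h1
      simp [(ne_add_one hN k).symm, (sub_one_ne hN k).symm]
    · by_cases h2 : k = j + 1
      · subst h2
        simp [ne_add_one hN j, add_one_ne_sub_one hN j]
      · by_cases h3 : k = j - 1
        · subst h3
          simp [sub_one_ne hN j, (add_one_ne_sub_one hN j).symm]
        · simp [h1, h2, h3]
  rw [Finset.sum_congr rfl (fun k _ => key k)]
  rw [Finset.sum_add_distrib, Finset.sum_add_distrib,
    Finset.sum_ite_eq' Finset.univ j, Finset.sum_ite_eq' Finset.univ (j+1),
    Finset.sum_ite_eq' Finset.univ (j-1)]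
  simp only [Finset.mem_univ, if_pos]
  ring

lemma sum_Amat_mulVec (hN : 3 ≤ N) (dx : ℝ) (x : Fin N → ℝ) :
    ∑ j, (Amat N dx).mulVec x j = 0 := by
  rw [Finset.sum_congr rfl (fun j _ => Amat_mulVec hN dx x j)]
  have e1 : ∑ j : Fin N, x (j + 1) = ∑ j : Fin N, x j :=
    Fintype.sum_equiv (Equiv.addRight (1 : Fin N)) _ _ (fun j => rfl)
  have e2 : ∑ j : Fin N, x (j - 1) = ∑ j : Fin N, x j :=
    Fintype.sum_equiv (Equiv.subRight (1 : Fin N)) _ _ (fun j => rfl)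
  rw [← Finset.sum_div]
  rw [show ∑ j : Fin N, (x (j+1) + x (j-1) - 2 * x j)
      = (∑ j : Fin N, x (j+1)) + (∑ j : Fin N, x (j-1)) - 2 * ∑ j : Fin N, x j by
    rw [Finset.sum_sub_distrib, Finset.sum_add_distrib, Finset.mul_sum]]
  rw [e1, e2]
  ring

noncomputable abbrev Pj (j : Fin N) : (Fin N → ℝ) →L[ℝ] ℝ :=
  ContinuousLinearMap.proj j

lemma exp_term_deriv (j : Fin N) (c d : ℝ) (hd : d ≠ 0) (x : Fin N → ℝ) :
    HasStrictFDerivAt (fun φ : Fin N → ℝ => c * Real.exp (φ j / d))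
      ((c / d * Real.exp (x j / d)) • Pj j) x := by
  have hfe : (fun φ : Fin N → ℝ => φ j / d) = ⇑(d⁻¹ • Pj j) := by
    ext φ; simp [div_eq_inv_mul, mul_comm]
  have hl : HasStrictFDerivAt (fun φ : Fin N → ℝ => φ j / d) (d⁻¹ • Pj j) x := by
    rw [hfe]; exact (d⁻¹ • Pj (N := N) j).hasStrictFDerivAt
  have he := (Real.hasStrictDerivAt_exp (x j / d)).comp_hasStrictFDerivAt x hl
  have h2 := he.const_mul c
  have : c • (Real.exp (x j / d) • (d⁻¹ • Pj (N := N) j)) = (c / d * Real.exp (x j / d)) • Pj j := by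
    rw [smul_smul, smul_smul]
    congr 1
    field_simp
  rw [this] at h2
  exact h2

lemma sq_term_deriv (j : Fin N) (x : Fin N → ℝ) :
    HasStrictFDerivAt (fun φ : Fin N → ℝ => (φ (j+1) - φ j)^2)
      ((2 * (x (j+1) - x j)) • (Pj (j+1) - Pj j)) x := by
  have hl : HasStrictFDerivAt (fun φ : Fin N → ℝ => φ (j+1) - φ j) (Pj (j+1) - Pj j) x :=
    ((Pj (N := N) (j+1)).hasStrictFDerivAt).sub ((Pj (N := N) j).hasStrictFDerivAt)
  have hp := (hasStrictDerivAt_pow 2 (x (j+1) - x j)).comp_hasStrictFDerivAt x hl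
  convert hp using 2
  · rfl
  · rfl
  · rfl
  · rfl
  · rfl
  · rfl
  push_cast
  ring

noncomputable def Ffun (dx : ℝ) (n0 T ρ : Fin N → ℝ) (φ : Fin N → ℝ) : ℝ :=
  -(1/(2*dx^2)) * (∑ j, (φ (j+1) - φ j)^2)
    + (∑ j, n0 j * T j * Real.exp (φ j / T j)) - ∑ j, ρ j * φ j

noncomputable def hfun (n0 T : Fin N → ℝ) (φ : Fin N → ℝ) : ℝ :=
  ∑ j, n0 j * Real.exp (φ j / T j)

lemma hfun_deriv (n0 T : Fin N → ℝ) (hT : ∀ j, T j ≠ 0) (x : Fin N → ℝ) :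
    HasStrictFDerivAt (hfun n0 T)
      (∑ j, (n0 j / T j * Real.exp (x j / T j)) • Pj j) x :=
  HasStrictFDerivAt.fun_sum (fun j _ => exp_term_deriv j (n0 j) (T j) (hT j) x)

lemma Ffun_deriv (hN : 3 ≤ N) (dx : ℝ) (hdx : dx ≠ 0) (n0 T ρ : Fin N → ℝ)
    (hT : ∀ j, T j ≠ 0) (x : Fin N → ℝ) :
    HasStrictFDerivAt (Ffun dx n0 T ρ)
      (∑ j, (-ρ j + (Amat N dx).mulVec x j + n0 j * Real.exp (x j / T j)) • Pj j) x := by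
  have h1 := (HasStrictFDerivAt.fun_sum (fun j (_ : j ∈ Finset.univ) => sq_term_deriv j x)).const_mul
    (-(1/(2*dx^2)))
  have h2 := HasStrictFDerivAt.fun_sum
    (fun j (_ : j ∈ Finset.univ) => exp_term_deriv j (n0 j * T j) (T j) (hT j) x)
  have h3 : HasStrictFDerivAt (fun φ : Fin N → ℝ => ∑ j, ρ j * φ j) (∑ j, ρ j • Pj j) x :=
    HasStrictFDerivAt.fun_sum (fun j _ => ((Pj (N := N) j).hasStrictFDerivAt).const_mul (ρ j))
  have hF := (h1.add h2).sub h3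
  have hEq : (-(1/(2*dx^2))) • (∑ j, (2 * (x (j+1) - x j)) • (Pj (N := N) (j+1) - Pj j))
      + (∑ j, ((n0 j * T j) / T j * Real.exp (x j / T j)) • Pj (N := N) j)
      - (∑ j, ρ j • Pj (N := N) j)
      = ∑ j, (-ρ j + (Amat N dx).mulVec x j + n0 j * Real.exp (x j / T j)) • Pj j := by
    ext v
    simp only [ContinuousLinearMap.add_apply, ContinuousLinearMap.sub_apply,
      ContinuousLinearMap.smul_apply, ContinuousLinearMap.sum_apply,
      ContinuousLinearMap.proj_apply, smul_eq_mul]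
    have reidx : ∑ j : Fin N, 2 * (x (j+1) - x j) * v (j+1)
        = ∑ j : Fin N, 2 * (x j - x (j-1)) * v j := by
      apply Fintype.sum_equiv (Equiv.addRight (1 : Fin N))
      intro j
      simp [Equiv.coe_addRight, add_sub_cancel_right]
    have e1 : ∑ j : Fin N, 2 * (x (j+1) - x j) * (v (j+1) - v j)
        = ∑ j : Fin N, (2 * (x j - x (j-1)) * v j - 2 * (x (j+1) - x j) * v j) := by
      rw [Finset.sum_sub_distrib, ← reidx, ← Finset.sum_sub_distrib]
      exact Finset.sum_congr rfl (fun j _ => by ring)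
    rw [e1, Finset.mul_sum, ← Finset.sum_add_distrib, ← Finset.sum_sub_distrib]
    refine Finset.sum_congr rfl (fun j _ => ?_)
    rw [Amat_mulVec hN dx x j, mul_div_cancel_right₀ _ (hT j)]
    field_simp
    ring
  rw [hEq] at hF
  exact hF

open Fin.NatCast in
lemma osc_bound (x : Fin N → ℝ) (i k : Fin N) :
    x k - x i ≤ N * Real.sqrt (∑ j, (x (j+1) - x j)^2) := by
  set Q := ∑ j, (x (j+1) - x j)^2 with hQdef
  have hQ0 : (0:ℝ) ≤ Q := Finset.sum_nonneg fun j _ => sq_nonneg _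
  have hstep : ∀ m : Fin N, x (m+1) - x m ≤ Real.sqrt Q := by
    intro m
    have h1 : (x (m+1) - x m)^2 ≤ Q :=
      Finset.single_le_sum (f := fun j => (x (j+1) - x j)^2)
        (fun j _ => sq_nonneg _) (Finset.mem_univ m)
    calc x (m+1) - x m ≤ |x (m+1) - x m| := le_abs_self _
      _ = Real.sqrt ((x (m+1) - x m)^2) := (Real.sqrt_sq_eq_abs _).symm
      _ ≤ Real.sqrt Q := Real.sqrt_le_sqrt h1
  have key : x k - x i
      = ∑ q ∈ Finset.range (k - i).val, (x (i + (q:Fin N) + 1) - x (i + (q:Fin N))) := by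
    have := Finset.sum_range_sub (f := fun q : ℕ => x (i + (q : Fin N))) (k - i).val
    rw [show ((((k - i).val : ℕ)) : Fin N) = k - i from Fin.cast_val_eq_self _,
      Nat.cast_zero, add_zero, add_comm i (k - i), sub_add_cancel] at this
    rw [← this]
    apply Finset.sum_congr rfl
    intro q hq
    push_cast
    rw [add_assoc]
  rw [key]
  calc ∑ q ∈ Finset.range (k - i).val, (x (i + (q:Fin N) + 1) - x (i + (q:Fin N)))
      ≤ ∑ _q ∈ Finset.range (k - i).val, Real.sqrt Q :=
        Finset.sum_le_sum fun q _ => hstep _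
    _ = (k - i).val * Real.sqrt Q := by rw [Finset.sum_const, Finset.card_range, nsmul_eq_mul]
    _ ≤ N * Real.sqrt Q := by
        apply mul_le_mul_of_nonneg_right _ (Real.sqrt_nonneg _)
        exact_mod_cast (k - i).isLt.le

end DPBaux

open DPBaux Filter

/-- existence of a solution of the discrete Poisson–Boltzmann equation. -/
theorem discrete_PoissonBoltzmann_exists (N : ℕ) [NeZero N] (hN : 3 ≤ N) (dx : ℝ)
    (hdx : 0 < dx) (n0 T ρ : Fin N → ℝ)
    (hn0 : ∀ j, 0 < n0 j) (hT : ∀ j, 0 < T j) (hρ : ∀ j, 0 < ρ j) :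
    ∃ φ : Fin N → ℝ, ∀ j,
      -ρ j + (Amat N dx).mulVec φ j + n0 j * Real.exp (φ j / T j) = 0 := by
  classical
  have hNpos : 0 < N := by omega
  have hNe : (Finset.univ : Finset (Fin N)).Nonempty :=
    ⟨⟨0, hNpos⟩, Finset.mem_univ _⟩
  have hTne : ∀ j, T j ≠ 0 := fun j => (hT j).ne'
  have hdxne : dx ≠ 0 := hdx.ne'
  set Sρ := ∑ j, ρ j with hSρdef
  have hSρpos : 0 < Sρ := Finset.sum_pos (fun j _ => hρ j) hNe
  set F := Ffun dx n0 T ρ (N := N) with hFdef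
  set h := hfun n0 T (N := N) with hhdef
  have Fcont : Continuous F :=
    continuous_iff_continuousAt.mpr fun x =>
      (Ffun_deriv hN dx hdxne n0 T ρ hTne x).differentiableAt.continuousAt
  have hcont : Continuous h :=
    continuous_iff_continuousAt.mpr fun x =>
      (hfun_deriv n0 T hTne x).differentiableAt.continuousAt
  -- a point of the constraint set: a constant vector
  set f : ℝ → ℝ := fun c => ∑ j, n0 j * Real.exp (c / T j) with hfdef
  have hfc : Continuous f := by
    apply continuous_finset_sum
    intro j _
    exact continuous_const.mul (Real.continuous_exp.comp (continuous_id.div_const (T j)))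
  have hbot : Tendsto f atBot (nhds 0) := by
    have : Tendsto (fun c : ℝ => ∑ j : Fin N, n0 j * Real.exp (c / T j)) atBot
        (nhds (∑ j : Fin N, n0 j * 0)) := by
      apply tendsto_finset_sum
      intro j _
      exact (Real.tendsto_exp_atBot.comp (tendsto_id.atBot_div_const (hT j))).const_mul (n0 j)
    simpa using this
  have htop : Tendsto f atTop atTop := by
    set j₀ : Fin N := ⟨0, hNpos⟩
    apply tendsto_atTop_mono (fun c => ?_)
      (Tendsto.const_mul_atTop (hn0 j₀)
        (Real.tendsto_exp_atTop.comp (tendsto_id.atTop_div_const (hT j₀))))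
    exact Finset.single_le_sum (f := fun j => n0 j * Real.exp (c / T j))
      (fun j _ => le_of_lt (mul_pos (hn0 j) (Real.exp_pos _))) (Finset.mem_univ j₀)
  obtain ⟨a, ha⟩ := (hbot.eventually_lt_const hSρpos).exists
  obtain ⟨b, hb⟩ := (htop.eventually_gt_atTop Sρ).exists
  obtain ⟨c₀, hc₀⟩ := intermediate_value_univ a b hfc ⟨ha.le, hb.le⟩
  set φ₀ : Fin N → ℝ := fun _ => c₀ with hφ₀def
  have hφ₀S : h φ₀ = Sρ := hc₀
  -- upper bound for components on the constraint set
  have hub : ∀ φ : Fin N → ℝ, h φ = Sρ → ∀ j, n0 j * Real.exp (φ j / T j) ≤ Sρ := by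
    intro φ hφ j
    rw [← hφ]
    exact Finset.single_le_sum (f := fun i => n0 i * Real.exp (φ i / T i))
      (fun i _ => le_of_lt (mul_pos (hn0 i) (Real.exp_pos _))) (Finset.mem_univ j)
  obtain ⟨Mb, hMb⟩ : ∃ Mb : ℝ, ∀ φ : Fin N → ℝ, h φ = Sρ → ∀ j, φ j ≤ Mb := by
    refine ⟨Finset.univ.sup' hNe (fun j => T j * Real.log (Sρ / n0 j)), fun φ hφ j => ?_⟩
    have h2 : Real.exp (φ j / T j) ≤ Sρ / n0 j := by
      rw [le_div_iff₀ (hn0 j)]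
      have := hub φ hφ j
      linarith [this, mul_comm (Real.exp (φ j / T j)) (n0 j)]
    have h3 : φ j / T j ≤ Real.log (Sρ / n0 j) :=
      (Real.le_log_iff_exp_le (div_pos hSρpos (hn0 j))).mpr h2
    have h4 : φ j ≤ T j * Real.log (Sρ / n0 j) := by
      rw [div_le_iff₀ (hT j)] at h3
      linarith [mul_comm (Real.log (Sρ / n0 j)) (T j)]
    exact h4.trans (Finset.le_sup' (f := fun j => T j * Real.log (Sρ / n0 j)) (Finset.mem_univ j))
  -- lower bound for the largest component on the constraint set
  obtain ⟨mb, hmb⟩ : ∃ mb : ℝ, ∀ φ : Fin N → ℝ, h φ = Sρ → ∃ i, mb ≤ φ i := by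
    refine ⟨Finset.univ.inf' hNe (fun j => T j * Real.log (Sρ / (N * n0 j))), fun φ hφ => ?_⟩
    have hφ' : ∑ j, n0 j * Real.exp (φ j / T j) = Sρ := hφ
    have hsum : ∑ _j : Fin N, Sρ / N ≤ ∑ j, n0 j * Real.exp (φ j / T j) := by
      rw [hφ', Finset.sum_const, Finset.card_univ, Fintype.card_fin, nsmul_eq_mul,
        mul_div_cancel₀ _ (by exact_mod_cast hNpos.ne' : (N:ℝ) ≠ 0)]
    obtain ⟨i, _, hi⟩ := Finset.exists_le_of_sum_le hNe hsum
    refine ⟨i, ?_⟩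
    have h2 : Sρ / (N * n0 i) ≤ Real.exp (φ i / T i) := by
      have hNn : (0:ℝ) < N := by exact_mod_cast hNpos
      rw [div_le_iff₀ (mul_pos hNn (hn0 i))]
      rw [div_le_iff₀ hNn] at hi
      calc Sρ ≤ n0 i * Real.exp (φ i / T i) * N := hi
        _ = Real.exp (φ i / T i) * (N * n0 i) := by ring
    have hNn : (0:ℝ) < N := by exact_mod_cast hNpos
    have h3 : Real.log (Sρ / (N * n0 i)) ≤ φ i / T i :=
      (Real.log_le_iff_le_exp (div_pos hSρpos (mul_pos hNn (hn0 i)))).mpr h2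
    have h4 : T i * Real.log (Sρ / (N * n0 i)) ≤ φ i := by
      rw [le_div_iff₀ (hT i)] at h3
      linarith [mul_comm (Real.log (Sρ / (N * n0 i))) (T i)]
    exact le_trans (Finset.inf'_le _ (Finset.mem_univ i)) h4
  -- bound for the exponential part of F on the constraint set
  set B := (∑ j, T j) * Sρ with hBdef
  have hB : ∀ φ : Fin N → ℝ, h φ = Sρ →
      ∑ j, n0 j * T j * Real.exp (φ j / T j) ≤ B := by
    intro φ hφ
    rw [hBdef, Finset.sum_mul]
    apply Finset.sum_le_sum
    intro j _
    have := hub φ hφ j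
    calc n0 j * T j * Real.exp (φ j / T j) = T j * (n0 j * Real.exp (φ j / T j)) := by ring
      _ ≤ T j * Sρ := by
          exact mul_le_mul_of_nonneg_left this (hT j).le
  -- basic norm facts
  have hcomp : ∀ φ : Fin N → ℝ, ∀ j, |φ j| ≤ ‖φ‖ := by
    intro φ j
    simpa [Real.norm_eq_abs] using norm_le_pi_norm φ j
  have hwit : ∀ φ : Fin N → ℝ, ∃ k, ‖φ‖ = |φ k| := by
    intro φ
    obtain ⟨k, -, hk⟩ := Finset.exists_mem_eq_sup Finset.univ hNe (fun j => ‖φ j‖₊)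
    refine ⟨k, ?_⟩
    rw [Pi.norm_def, hk]
    simp [Real.norm_eq_abs]
  -- the comparison function
  set ψ : ℝ → ℝ := fun r => -(1/(2*dx^2)) * ((r + mb)/N)^2 + B + Sρ * r with hψdef
  set R₀ : ℝ := max Mb (-mb) with hR₀def
  have hcoerc : ∀ φ : Fin N → ℝ, h φ = Sρ → R₀ < ‖φ‖ → F φ ≤ ψ ‖φ‖ := by
    intro φ hφ hR
    obtain ⟨k, hk⟩ := hwit φ
    have hφk : φ k = -‖φ‖ := by
      have h1 : φ k ≤ Mb := hMb φ hφ k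
      have h2 : φ k < |φ k| := by
        rw [← hk]
        exact lt_of_le_of_lt h1 (lt_of_le_of_lt (le_max_left _ _) hR)
      rcases abs_cases (φ k) with ⟨he, _⟩ | ⟨he, _⟩
      · rw [he] at h2; exact absurd h2 (lt_irrefl _)
      · rw [hk, he]; ring
    obtain ⟨i, hi⟩ := hmb φ hφ
    set Q := ∑ j, (φ (j+1) - φ j)^2 with hQdef
    have hQ0 : (0:ℝ) ≤ Q := Finset.sum_nonneg fun j _ => sq_nonneg _
    have hosc : mb + ‖φ‖ ≤ φ i - φ k := by rw [hφk]; linarith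
    have hoscpos : 0 ≤ mb + ‖φ‖ := by
      have : -mb < ‖φ‖ := lt_of_le_of_lt (le_max_right _ _) hR
      linarith
    have hNsq : mb + ‖φ‖ ≤ N * Real.sqrt Q := le_trans hosc (osc_bound φ k i)
    have hNr : (0:ℝ) < N := by exact_mod_cast hNpos
    have hdivsq : ((‖φ‖ + mb)/N)^2 ≤ Q := by
      have hdiv : (‖φ‖ + mb)/N ≤ Real.sqrt Q := by
        rw [div_le_iff₀ hNr]
        calc ‖φ‖ + mb = mb + ‖φ‖ := by ring
          _ ≤ N * Real.sqrt Q := hNsq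
          _ = Real.sqrt Q * N := by ring
      have hd0 : 0 ≤ (‖φ‖ + mb)/N := div_nonneg (by linarith) hNr.le
      calc ((‖φ‖ + mb)/N)^2 ≤ (Real.sqrt Q)^2 := by
            apply pow_le_pow_left₀ hd0 hdiv
        _ = Q := Real.sq_sqrt hQ0
    have t1 : -(1/(2*dx^2)) * Q ≤ -(1/(2*dx^2)) * ((‖φ‖ + mb)/N)^2 := by
      have hc : (0:ℝ) < 1/(2*dx^2) := by positivity
      nlinarith
    have t2 : ∑ j, n0 j * T j * Real.exp (φ j / T j) ≤ B := hB φ hφ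
    have t3 : -(∑ j, ρ j * φ j) ≤ Sρ * ‖φ‖ := by
      rw [← Finset.sum_neg_distrib, hSρdef, Finset.sum_mul]
      apply Finset.sum_le_sum
      intro j _
      have : -φ j ≤ ‖φ‖ := le_trans (neg_le_abs _) (hcomp φ j)
      calc -(ρ j * φ j) = ρ j * (-φ j) := by ring
        _ ≤ ρ j * ‖φ‖ := mul_le_mul_of_nonneg_left this (hρ j).le
    rw [hFdef, Ffun, hψdef]
    have : ((‖φ‖ + mb)/N)^2 = ((‖φ‖ + mb)/N)^2 := rfl
    simp only
    linarith
  -- ψ tends to -∞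
  have hψtend : Tendsto ψ atTop atBot := by
    have hNr : ((N:ℝ)) ≠ 0 := by
      exact_mod_cast hNpos.ne'
    have hψeq : ψ = fun r => r * (-(1/(2*dx^2*N^2)) * r + (Sρ - (1/(dx^2*N^2)) * mb))
        + (B - (1/(2*dx^2*N^2)) * mb^2) := by
      funext r
      rw [hψdef]
      field_simp
      ring
    rw [hψeq]
    apply tendsto_atBot_add_const_right
    apply Tendsto.atTop_mul_atBot₀ tendsto_id
    apply tendsto_atBot_add_const_right
    have hneg : -(1/(2*dx^2*N^2)) < 0 := by
      have : (0:ℝ) < 1/(2*dx^2*N^2) := by positivity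
      linarith
    exact Tendsto.const_mul_atTop_of_neg hneg tendsto_id
  obtain ⟨R₁, hR₁⟩ := eventually_atTop.mp (hψtend.eventually_lt_atBot (F φ₀))
  set R := max (R₀ + 1) R₁ with hRdef
  set K := {φ : Fin N → ℝ | h φ = Sρ ∧ F φ₀ ≤ F φ} with hKdef
  have hKsub : K ⊆ Metric.closedBall 0 R := by
    intro φ hφ
    rw [Metric.mem_closedBall, dist_zero_right]
    by_contra hcon
    push_neg at hcon
    have h1 : R₀ < ‖φ‖ := by
      have : R₀ + 1 ≤ R := le_max_left _ _
      linarith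
    have h2 : R₁ ≤ ‖φ‖ := le_trans (le_max_right _ _) hcon.le
    have h3 : F φ ≤ ψ ‖φ‖ := hcoerc φ hφ.1 h1
    have h4 : ψ ‖φ‖ < F φ₀ := hR₁ _ h2
    have h5 : F φ₀ ≤ F φ := hφ.2
    linarith
  have hKclosed : IsClosed K := by
    have := ((isClosed_singleton (x := Sρ)).preimage hcont).inter
      ((isClosed_Ici (a := F φ₀)).preimage Fcont)
    convert this using 1
    rfl
  have hKcpt : IsCompact K :=
    (isCompact_closedBall (0 : Fin N → ℝ) R).of_isClosed_subset hKclosed hKsub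
  have hφ₀K : φ₀ ∈ K := ⟨hφ₀S, le_refl _⟩
  obtain ⟨x₀, hx₀K, hx₀max⟩ := hKcpt.exists_isMaxOn ⟨φ₀, hφ₀K⟩ Fcont.continuousOn
  have hx₀S : h x₀ = Sρ := hx₀K.1
  have hmaxS : IsMaxOn F {x | h x = h x₀} x₀ := by
    intro φ hφ
    have hφS : h φ = Sρ := by rw [Set.mem_setOf_eq] at hφ; rw [hφ, hx₀S]
    by_cases hc : F φ₀ ≤ F φ
    · exact hx₀max ⟨hφS, hc⟩
    · push_neg at hc
      have := hx₀max hφ₀K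
      exact le_trans hc.le this
  have hextr : IsLocalExtrOn F {x | h x = h x₀} x₀ := Or.inr hmaxS.localize
  obtain ⟨a', b', hab, heq⟩ := hextr.exists_multipliers_of_hasStrictFDerivAt_1d
    (hfun_deriv n0 T hTne x₀) (Ffun_deriv hN dx hdxne n0 T ρ hTne x₀)
  -- evaluate the multiplier identity
  have heval : ∀ v : Fin N → ℝ,
      a' * (∑ j, (n0 j / T j * Real.exp (x₀ j / T j)) * v j)
        + b' * (∑ j, (-ρ j + (Amat N dx).mulVec x₀ j + n0 j * Real.exp (x₀ j / T j)) * v j)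
      = 0 := by
    intro v
    have := ContinuousLinearMap.ext_iff.mp heq v
    simpa [ContinuousLinearMap.sum_apply, ContinuousLinearMap.smul_apply,
      ContinuousLinearMap.proj_apply, Finset.mul_sum, mul_assoc] using this
  have ha0 : a' = 0 := by
    have h1 := heval (fun _ => 1)
    have hzero : ∑ j, (-ρ j + (Amat N dx).mulVec x₀ j + n0 j * Real.exp (x₀ j / T j)) * 1 = 0 := by
      simp only [mul_one]
      rw [Finset.sum_add_distrib, Finset.sum_add_distrib, sum_Amat_mulVec hN dx x₀]
      have : ∑ j, n0 j * Real.exp (x₀ j / T j) = Sρ := hx₀S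
      rw [this, Finset.sum_neg_distrib, hSρdef]
      ring
    rw [hzero, mul_zero, add_zero, mul_eq_zero] at h1
    rcases h1 with h1 | h1
    · exact h1
    · exfalso
      have hpos : 0 < ∑ j, (n0 j / T j * Real.exp (x₀ j / T j)) * 1 := by
        apply Finset.sum_pos _ hNe
        intro j _
        have : 0 < n0 j / T j * Real.exp (x₀ j / T j) :=
          mul_pos (div_pos (hn0 j) (hT j)) (Real.exp_pos _)
        simpa using this
      rw [h1] at hpos
      exact lt_irrefl _ hpos
  have hb0 : b' ≠ 0 := by
    intro hb
    apply hab
    rw [ha0, hb]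
    rfl
  refine ⟨x₀, fun i => ?_⟩
  have h1 := heval (Pi.single i (1:ℝ))
  rw [ha0, zero_mul, zero_add, mul_eq_zero] at h1
  rcases h1 with h1 | h1
  · exact absurd h1 hb0
  · have : ∑ j, (-ρ j + (Amat N dx).mulVec x₀ j + n0 j * Real.exp (x₀ j / T j)) * (Pi.single i (1:ℝ) : Fin N → ℝ) j
        = -ρ i + (Amat N dx).mulVec x₀ i + n0 i * Real.exp (x₀ i / T i) := by
      simp only [Pi.single_apply, mul_ite, mul_one, mul_zero]
      rw [Finset.sum_ite_eq' Finset.univ i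
        (fun j => -ρ j + (Amat N dx).mulVec x₀ j + n0 j * Real.exp (x₀ j / T j))]
      simp
    rw [this] at h1
    exact h1
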